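/- arXiv:1001.3807 — 2 statements merged into one kernel-verified Lean document; each statement's English description precedes it below -/
import Mathlib

section
/- Let U be a unitary representation of a finite group G decomposing as U_g ≅ ⊕_i D^i(g) ⊗ 1_{m_i} with irreducible components D^i of dimensions d_i and multiplicities m_i, and define Δ = (1/|G|) ⊕_i (d_i/m_i) 1_{d_i} ⊗ 1_{m_i}. Then for every g ∈ G, Σ_{h∈G} tr(U_{g h⁻¹} Δ) · U_h = U_g. -/
open Matrix BigOperators


section aux
variable {G : Type*} [Group G] [Fintype G]

theorem aux_intertwine {n p : ℕ} (Dj : G →* Matrix.unitaryGroup (Fin p) ℂ)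
    (Di : G →* Matrix.unitaryGroup (Fin n) ℂ) (E : Matrix (Fin p) (Fin n) ℂ) (g : G) :
    (Dj g : Matrix (Fin p) (Fin p) ℂ) *
        (∑ h : G, (Dj h : Matrix (Fin p) (Fin p) ℂ) * E * (Di h⁻¹ : Matrix (Fin n) (Fin n) ℂ))
      = (∑ h : G, (Dj h : Matrix (Fin p) (Fin p) ℂ) * E * (Di h⁻¹ : Matrix (Fin n) (Fin n) ℂ)) *
        (Di g : Matrix (Fin n) (Fin n) ℂ) := by
  rw [Matrix.mul_sum, Matrix.sum_mul]
  apply Fintype.sum_equiv (Equiv.mulLeft g)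
  intro h
  have h1 : (Dj (g * h) : Matrix (Fin p) (Fin p) ℂ)
      = (Dj g : Matrix (Fin p) (Fin p) ℂ) * (Dj h : Matrix (Fin p) (Fin p) ℂ) := by
    rw [_root_.map_mul]; rfl
  have h2 : (Di ((g * h)⁻¹) : Matrix (Fin n) (Fin n) ℂ) * (Di g : Matrix (Fin n) (Fin n) ℂ)
      = (Di h⁻¹ : Matrix (Fin n) (Fin n) ℂ) := by
    have key : Di ((g*h)⁻¹) * Di g = Di h⁻¹ := by
      rw [← _root_.map_mul]; congr 1; group
    calc (Di ((g * h)⁻¹) : Matrix (Fin n) (Fin n) ℂ) * (Di g : Matrix (Fin n) (Fin n) ℂ)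
        = ((Di ((g*h)⁻¹) * Di g : Matrix.unitaryGroup (Fin n) ℂ) : Matrix (Fin n) (Fin n) ℂ) := rfl
      _ = _ := by rw [key]
  show (Dj g : Matrix (Fin p) (Fin p) ℂ) *
      ((Dj h : Matrix (Fin p) (Fin p) ℂ) * E * (Di h⁻¹ : Matrix (Fin n) (Fin n) ℂ))
    = (Dj (g * h) : Matrix (Fin p) (Fin p) ℂ) * E *
        (Di ((g * h)⁻¹) : Matrix (Fin n) (Fin n) ℂ) * (Di g : Matrix (Fin n) (Fin n) ℂ)
  rw [h1, Matrix.mul_assoc _ _ (Di g : Matrix (Fin n) (Fin n) ℂ), h2,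
    ← Matrix.mul_assoc, ← Matrix.mul_assoc]
end aux

section aux2
variable {G : Type*} [Group G] [Fintype G]

theorem aux_entry {n p : ℕ} (M : Matrix (Fin p) (Fin p) ℂ) (N : Matrix (Fin n) (Fin n) ℂ)
    (c r : Fin p) (b a : Fin n) :
    (M * Matrix.single c b (1:ℂ) * N) r a = M r c * N b a := by
  simp [Matrix.mul_apply, Matrix.single, ite_and, Finset.mul_sum, Finset.sum_mul,
    Finset.sum_ite_eq, Finset.sum_ite_eq']

theorem aux_zero {n p : ℕ} (Dj : G →* Matrix.unitaryGroup (Fin p) ℂ)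
    (Di : G →* Matrix.unitaryGroup (Fin n) ℂ)
    (hT : ∀ T : Matrix (Fin p) (Fin n) ℂ,
      (∀ g, (Dj g : Matrix (Fin p) (Fin p) ℂ) * T = T * (Di g : Matrix (Fin n) (Fin n) ℂ)) → T = 0)
    (E : Matrix (Fin p) (Fin n) ℂ) :
    ∑ h : G, (Dj h : Matrix (Fin p) (Fin p) ℂ) * E * (Di h⁻¹ : Matrix (Fin n) (Fin n) ℂ) = 0 :=
  hT _ (fun g => aux_intertwine Dj Di E g)

theorem aux_scalar {n : ℕ} (hn : 0 < n) (Di : G →* Matrix.unitaryGroup (Fin n) ℂ)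
    (hirr : ∀ X : Matrix (Fin n) (Fin n) ℂ,
      (∀ g, (Di g : Matrix (Fin n) (Fin n) ℂ) * X = X * (Di g : Matrix (Fin n) (Fin n) ℂ)) →
        ∃ c : ℂ, X = c • 1)
    (E : Matrix (Fin n) (Fin n) ℂ) :
    ∑ h : G, (Di h : Matrix (Fin n) (Fin n) ℂ) * E * (Di h⁻¹ : Matrix (Fin n) (Fin n) ℂ)
      = ((Fintype.card G : ℂ) * Matrix.trace E / (n : ℂ)) • 1 := by
  obtain ⟨c, hc⟩ := hirr _ (fun g => aux_intertwine Di Di E g)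
  have htr : Matrix.trace (∑ h : G, (Di h : Matrix (Fin n) (Fin n) ℂ) * E *
      (Di h⁻¹ : Matrix (Fin n) (Fin n) ℂ)) = (Fintype.card G : ℂ) * Matrix.trace E := by
    rw [Matrix.trace_sum]
    have : ∀ h : G, Matrix.trace ((Di h : Matrix (Fin n) (Fin n) ℂ) * E *
        (Di h⁻¹ : Matrix (Fin n) (Fin n) ℂ)) = Matrix.trace E := by
      intro h
      rw [Matrix.trace_mul_cycle]
      have : (Di h⁻¹ : Matrix (Fin n) (Fin n) ℂ) * (Di h : Matrix (Fin n) (Fin n) ℂ) = 1 := by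
        have key : Di h⁻¹ * Di h = 1 := by rw [← _root_.map_mul, inv_mul_cancel, _root_.map_one]
        calc (Di h⁻¹ : Matrix (Fin n) (Fin n) ℂ) * (Di h : Matrix (Fin n) (Fin n) ℂ)
            = ((Di h⁻¹ * Di h : Matrix.unitaryGroup (Fin n) ℂ) : Matrix (Fin n) (Fin n) ℂ) := rfl
          _ = 1 := by rw [key]; rfl
      rw [this, Matrix.one_mul]
    rw [Finset.sum_congr rfl (fun h _ => this h), Finset.sum_const, Finset.card_univ,
      nsmul_eq_mul]
  rw [hc] at htr ⊢
  have hcval : c * n = (Fintype.card G : ℂ) * Matrix.trace E := by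
    simpa [Matrix.trace_smul, Matrix.trace_one, mul_comm] using htr
  have hn' : (n : ℂ) ≠ 0 := Nat.cast_ne_zero.mpr hn.ne'
  congr 1
  field_simp [← hcval]
  exact hcval
end aux2

section aux3
variable {G : Type*} [Group G] [Fintype G]

theorem aux_N_expand {n p : ℕ} (Dj : G →* Matrix.unitaryGroup (Fin p) ℂ)
    (Di : G →* Matrix.unitaryGroup (Fin n) ℂ) (A : Matrix (Fin n) (Fin n) ℂ)
    (r c : Fin p) (h : G) :
    Matrix.trace (A * (Di h⁻¹ : Matrix (Fin n) (Fin n) ℂ)) * (Dj h : Matrix (Fin p) (Fin p) ℂ) r c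
      = ∑ a : Fin n, ∑ b : Fin n, A a b *
          ((Dj h : Matrix (Fin p) (Fin p) ℂ) r c * (Di h⁻¹ : Matrix (Fin n) (Fin n) ℂ) b a) := by
  rw [Matrix.trace]
  simp only [Matrix.diag, Matrix.mul_apply, Finset.sum_mul]
  refine Finset.sum_congr rfl fun a _ => ?_
  exact Finset.sum_congr rfl fun b _ => by ring

theorem aux_N_zero {n p : ℕ} (Dj : G →* Matrix.unitaryGroup (Fin p) ℂ)
    (Di : G →* Matrix.unitaryGroup (Fin n) ℂ)
    (hT : ∀ T : Matrix (Fin p) (Fin n) ℂ,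
      (∀ g, (Dj g : Matrix (Fin p) (Fin p) ℂ) * T = T * (Di g : Matrix (Fin n) (Fin n) ℂ)) → T = 0)
    (A : Matrix (Fin n) (Fin n) ℂ) :
    ∑ h : G, (Matrix.trace (A * (Di h⁻¹ : Matrix (Fin n) (Fin n) ℂ)))
        • (Dj h : Matrix (Fin p) (Fin p) ℂ) = 0 := by
  have key : ∀ (r cc : Fin p) (b a : Fin n),
      ∑ h : G, ((Dj h : Matrix (Fin p) (Fin p) ℂ) r cc *
        (Di h⁻¹ : Matrix (Fin n) (Fin n) ℂ) b a) = 0 := by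
    intro r cc b a
    have h0 := congrArg (fun M => M r a) (aux_zero Dj Di hT (Matrix.single cc b 1))
    simpa [Matrix.sum_apply, aux_entry] using h0
  ext r c
  simp only [Matrix.sum_apply, Matrix.smul_apply, smul_eq_mul, Matrix.zero_apply]
  rw [Finset.sum_congr rfl (fun h _ => aux_N_expand Dj Di A r c h), Finset.sum_comm]
  refine Finset.sum_eq_zero fun a _ => ?_
  rw [Finset.sum_comm]
  refine Finset.sum_eq_zero fun b _ => ?_
  rw [← Finset.mul_sum, key r c b a, mul_zero]

theorem aux_N_scalar {n : ℕ} (hn : 0 < n) (Di : G →* Matrix.unitaryGroup (Fin n) ℂ)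
    (hirr : ∀ X : Matrix (Fin n) (Fin n) ℂ,
      (∀ g, (Di g : Matrix (Fin n) (Fin n) ℂ) * X = X * (Di g : Matrix (Fin n) (Fin n) ℂ)) →
        ∃ c : ℂ, X = c • 1)
    (A : Matrix (Fin n) (Fin n) ℂ) :
    ∑ h : G, (Matrix.trace (A * (Di h⁻¹ : Matrix (Fin n) (Fin n) ℂ)))
        • (Di h : Matrix (Fin n) (Fin n) ℂ)
      = ((Fintype.card G : ℂ) / (n : ℂ)) • A := by
  have key : ∀ (r cc b a : Fin n),
      ∑ h : G, ((Di h : Matrix (Fin n) (Fin n) ℂ) r cc *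
        (Di h⁻¹ : Matrix (Fin n) (Fin n) ℂ) b a)
      = ((Fintype.card G : ℂ) * Matrix.trace (Matrix.single cc b (1:ℂ)) / (n : ℂ)) *
          (1 : Matrix (Fin n) (Fin n) ℂ) r a := by
    intro r cc b a
    have h0 := congrArg (fun M => M r a)
      (aux_scalar hn Di hirr (Matrix.single cc b 1))
    simpa [Matrix.sum_apply, aux_entry, Matrix.smul_apply, smul_eq_mul] using h0
  ext r c
  simp only [Matrix.sum_apply, Matrix.smul_apply, smul_eq_mul]
  rw [Finset.sum_congr rfl (fun h _ => aux_N_expand Di Di A r c h), Finset.sum_comm]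
  have : ∀ a : Fin n, ∑ h : G, ∑ b : Fin n, A a b *
      ((Di h : Matrix (Fin n) (Fin n) ℂ) r c * (Di h⁻¹ : Matrix (Fin n) (Fin n) ℂ) b a)
      = ∑ b : Fin n, A a b *
        (((Fintype.card G : ℂ) * Matrix.trace (Matrix.single c b (1:ℂ)) / (n : ℂ)) *
          (1 : Matrix (Fin n) (Fin n) ℂ) r a) := by
    intro a
    rw [Finset.sum_comm]
    exact Finset.sum_congr rfl fun b _ => by rw [← Finset.mul_sum, key r c b a]
  rw [Finset.sum_congr rfl (fun a _ => this a)]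
  simp only [Matrix.trace, Matrix.diag, Matrix.single, Matrix.one_apply, Matrix.of_apply,
    ite_and, Finset.sum_ite_eq, Finset.sum_ite_eq', Finset.mem_univ, if_true,
    ite_div, zero_div, mul_ite, mul_zero, mul_one]
  simp [Finset.sum_ite_eq', mul_comm, mul_div_assoc]
end aux3

theorem aux_kron_sum {ιt : Type*} (s : Finset ιt) {n q : ℕ} (c : ιt → ℂ)
    (A : ιt → Matrix (Fin n) (Fin n) ℂ) :
    ∑ x ∈ s, c x • (Matrix.kroneckerMap (· * ·) (A x) (1 : Matrix (Fin q) (Fin q) ℂ))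
      = Matrix.kroneckerMap (· * ·) (∑ x ∈ s, c x • A x) (1 : Matrix (Fin q) (Fin q) ℂ) := by
  ext ⟨a, p⟩ ⟨b, qq⟩
  simp [Matrix.sum_apply, Matrix.smul_apply, smul_eq_mul, Finset.sum_mul, mul_assoc,
    Matrix.one_apply]

/-- Let U be a unitary representation of a finite group G with isotypic
decomposition U_g = ⊕_i D^i(g) ⊗ 1_{m_i}, where the D^i are pairwise non-isomorphic
irreducible unitary representations of dimensions d_i with multiplicities m_i, and let
Δ = (1/|G|) ⊕_i (d_i/m_i) 1_{d_i} ⊗ 1_{m_i}.  Then for every g ∈ G,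
Σ_h tr(U_{g h⁻¹} Δ) • U_h = U_g.  Irreducibility of D^i is expressed by its commutant
consisting of scalars (Schur), and non-isomorphy by the absence of nonzero intertwiners. -/
theorem sum_trace_delta_reproduces_rep
    {G : Type*} [Group G] [Fintype G] {I : Type*} [Fintype I] [DecidableEq I]
    (d m : I → ℕ) (hd : ∀ i, 0 < d i) (hm : ∀ i, 0 < m i)
    (D : ∀ i, G →* Matrix.unitaryGroup (Fin (d i)) ℂ)
    (hirr : ∀ i (X : Matrix (Fin (d i)) (Fin (d i)) ℂ),
      (∀ g, (D i g : Matrix (Fin (d i)) (Fin (d i)) ℂ) * X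
          = X * (D i g : Matrix (Fin (d i)) (Fin (d i)) ℂ)) → ∃ c : ℂ, X = c • 1)
    (hdisj : ∀ i j, i ≠ j → ∀ T : Matrix (Fin (d i)) (Fin (d j)) ℂ,
      (∀ g, (D i g : Matrix (Fin (d i)) (Fin (d i)) ℂ) * T
          = T * (D j g : Matrix (Fin (d j)) (Fin (d j)) ℂ)) → T = 0)
    (U : G → Matrix (Σ i, Fin (d i) × Fin (m i)) (Σ i, Fin (d i) × Fin (m i)) ℂ)
    (hU : ∀ g, U g = Matrix.blockDiagonal' (fun i =>
      Matrix.kroneckerMap (· * ·) (D i g : Matrix (Fin (d i)) (Fin (d i)) ℂ)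
        (1 : Matrix (Fin (m i)) (Fin (m i)) ℂ)))
    (Δ : Matrix (Σ i, Fin (d i) × Fin (m i)) (Σ i, Fin (d i) × Fin (m i)) ℂ)
    (hΔ : Δ = Matrix.blockDiagonal' (fun i =>
      ((d i : ℂ) / ((m i : ℂ) * (Fintype.card G : ℂ)))
        • (1 : Matrix (Fin (d i) × Fin (m i)) (Fin (d i) × Fin (m i)) ℂ)))
    (g : G) :
    ∑ h : G, (Matrix.trace (U (g * h⁻¹) * Δ)) • U h = U g := by
  have hcard : (Fintype.card G : ℂ) ≠ 0 := Nat.cast_ne_zero.mpr Fintype.card_ne_zero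
  simp only [hU, hΔ]
  -- Step 1: compute the trace coefficient
  have coeff : ∀ k : G,
      Matrix.trace ((Matrix.blockDiagonal' (fun i =>
          Matrix.kroneckerMap (· * ·) (D i k : Matrix (Fin (d i)) (Fin (d i)) ℂ)
            (1 : Matrix (Fin (m i)) (Fin (m i)) ℂ))) *
        Matrix.blockDiagonal' (fun i =>
          ((d i : ℂ) / ((m i : ℂ) * (Fintype.card G : ℂ)))
            • (1 : Matrix (Fin (d i) × Fin (m i)) (Fin (d i) × Fin (m i)) ℂ)))
      = ∑ i : I, ((d i : ℂ) / (Fintype.card G : ℂ)) *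
          Matrix.trace (D i k : Matrix (Fin (d i)) (Fin (d i)) ℂ) := by
    intro k
    rw [← Matrix.blockDiagonal'_mul, Matrix.trace_blockDiagonal']
    refine Finset.sum_congr rfl fun i _ => ?_
    rw [Matrix.mul_smul, Matrix.mul_one, Matrix.trace_smul, Matrix.trace_kronecker,
      Matrix.trace_one]
    have hmi : (m i : ℂ) ≠ 0 := Nat.cast_ne_zero.mpr (hm i).ne'
    simp only [smul_eq_mul, Fintype.card_fin]
    field_simp
  rw [Finset.sum_congr rfl (fun h _ => by rw [coeff (g * h⁻¹)])]
  -- Step 2: push smul and sum inside blockDiagonal'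
  have step1 : ∀ h : G,
      (∑ i : I, ((d i : ℂ) / (Fintype.card G : ℂ)) *
          Matrix.trace (D i (g * h⁻¹) : Matrix (Fin (d i)) (Fin (d i)) ℂ)) •
        Matrix.blockDiagonal' (fun i =>
          Matrix.kroneckerMap (· * ·) (D i h : Matrix (Fin (d i)) (Fin (d i)) ℂ)
            (1 : Matrix (Fin (m i)) (Fin (m i)) ℂ))
      = Matrix.blockDiagonal' (fun i =>
          (∑ i' : I, ((d i' : ℂ) / (Fintype.card G : ℂ)) *
            Matrix.trace (D i' (g * h⁻¹) : Matrix (Fin (d i')) (Fin (d i')) ℂ)) •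
          Matrix.kroneckerMap (· * ·) (D i h : Matrix (Fin (d i)) (Fin (d i)) ℂ)
            (1 : Matrix (Fin (m i)) (Fin (m i)) ℂ)) :=
    fun h => (Matrix.blockDiagonal'_smul _ _).symm
  rw [Finset.sum_congr rfl (fun h _ => step1 h)]
  have sum_bd : ∀ (F : G → ∀ i, Matrix (Fin (d i) × Fin (m i)) (Fin (d i) × Fin (m i)) ℂ),
      ∑ h : G, Matrix.blockDiagonal' (F h)
        = Matrix.blockDiagonal' (fun i => ∑ h : G, F h i) := by
    intro F
    calc ∑ h : G, Matrix.blockDiagonal' (F h)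
        = Matrix.blockDiagonal'AddMonoidHom _ _ ℂ (∑ h : G, F h) :=
          (map_sum (Matrix.blockDiagonal'AddMonoidHom _ _ ℂ) F Finset.univ).symm
      _ = Matrix.blockDiagonal' (fun i => ∑ h : G, F h i) :=
          congrArg Matrix.blockDiagonal'
            (funext fun i => Finset.sum_apply i Finset.univ F)
  rw [sum_bd]
  refine congrArg Matrix.blockDiagonal' (funext fun j => ?_)
  -- Step 3: per-block identity
  rw [aux_kron_sum]
  congr 1
  -- reduce to: ∑ h, (∑ i, coeff) • D j h = D j g
  have swap : ∑ h : G, (∑ i : I, ((d i : ℂ) / (Fintype.card G : ℂ)) *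
        Matrix.trace (D i (g * h⁻¹) : Matrix (Fin (d i)) (Fin (d i)) ℂ)) •
        (D j h : Matrix (Fin (d j)) (Fin (d j)) ℂ)
      = ∑ i : I, ((d i : ℂ) / (Fintype.card G : ℂ)) •
          ∑ h : G, Matrix.trace ((D i g : Matrix (Fin (d i)) (Fin (d i)) ℂ) *
            (D i h⁻¹ : Matrix (Fin (d i)) (Fin (d i)) ℂ)) •
            (D j h : Matrix (Fin (d j)) (Fin (d j)) ℂ) := by
    rw [Finset.sum_congr rfl (fun h _ => Finset.sum_smul)]
    rw [Finset.sum_comm]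
    refine Finset.sum_congr rfl fun i _ => ?_
    rw [Finset.smul_sum]
    refine Finset.sum_congr rfl fun h _ => ?_
    have : (D i (g * h⁻¹) : Matrix (Fin (d i)) (Fin (d i)) ℂ)
        = (D i g : Matrix (Fin (d i)) (Fin (d i)) ℂ) *
          (D i h⁻¹ : Matrix (Fin (d i)) (Fin (d i)) ℂ) := by
      rw [_root_.map_mul]; rfl
    rw [this, mul_smul]
  rw [swap]
  rw [Finset.sum_eq_single j ?side ?side2]
  · rw [aux_N_scalar (hd j) (D j) (hirr j) (D j g : Matrix (Fin (d j)) (Fin (d j)) ℂ)]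
    rw [smul_smul]
    have hdj : ((d j : ℂ)) ≠ 0 := Nat.cast_ne_zero.mpr (hd j).ne'
    have : (d j : ℂ) / (Fintype.card G : ℂ) * ((Fintype.card G : ℂ) / (d j : ℂ)) = 1 := by
      field_simp
    rw [this, one_smul]
  case side =>
    intro i _ hij
    rw [aux_N_zero (D j) (D i) (hdisj j i hij.symm) (D i g : Matrix (Fin (d i)) (Fin (d i)) ℂ),
      smul_zero]
  case side2 =>
    intro hj
    exact absurd (Finset.mem_univ j) hj
end

section
/- If U is a semi-regular representation of a finite group G (i.e., U contains every irreducible representation of G at least once), then with Δ as above, tr(U_g† U_h Δ) = δ_{g,h} for all g, h ∈ G. In particular, the operators {U_g}_{g∈G} are linearly independent. -/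
open scoped Classical
open Matrix BigOperators

namespace SemiregAux

variable {G : Type*} [Group G] [Fintype G]


variable {G : Type*} [Group G] [Fintype G]

def rop (x : G) : EuclideanSpace ℂ G →ₗ[ℂ] EuclideanSpace ℂ G where
  toFun f := WithLp.toLp 2 (fun g => f (g * x))
  map_add' _ _ := rfl
  map_smul' _ _ := rfl

@[simp] lemma rop_apply (x : G) (f : EuclideanSpace ℂ G) (g : G) : rop x f g = f (g * x) := rfl

omit [Fintype G] in
lemma rop_rop (x y : G) (f : EuclideanSpace ℂ G) : rop x (rop y f) = rop (x * y) f := by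
  ext g; show f (g * x * y) = f (g * (x * y)); rw [mul_assoc]

omit [Fintype G] in
lemma rop_one (f : EuclideanSpace ℂ G) : rop (1 : G) f = f := by
  ext g; show f (g * 1) = f g; rw [mul_one]

lemma inner_rop (x : G) (f h : EuclideanSpace ℂ G) :
    (inner ℂ (rop x f) (rop x h) : ℂ) = inner ℂ f h := by
  simp only [PiLp.inner_apply, RCLike.inner_apply, rop_apply]
  exact Fintype.sum_equiv (Equiv.mulRight x) _ _ (fun g => rfl)

theorem coeff_span_top {I : Type*} [Fintype I] [DecidableEq I]
    (d : I → ℕ)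
    (D : ∀ i, G →* Matrix.unitaryGroup (Fin (d i)) ℂ)
    (hsemireg : ∀ (n : ℕ), 0 < n → ∀ (E : G →* Matrix.unitaryGroup (Fin n) ℂ),
      (∀ X : Matrix (Fin n) (Fin n) ℂ,
        (∀ g, (E g : Matrix (Fin n) (Fin n) ℂ) * X = X * (E g : Matrix (Fin n) (Fin n) ℂ))
          → ∃ c : ℂ, X = c • 1) →
      ∃ i, ∃ T : Matrix (Fin n) (Fin (d i)) ℂ, T ≠ 0 ∧
        ∀ g, (E g : Matrix (Fin n) (Fin n) ℂ) * T
            = T * (D i g : Matrix (Fin (d i)) (Fin (d i)) ℂ)) :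
    Submodule.span ℂ {f : EuclideanSpace ℂ G |
        ∃ i a b, f = WithLp.toLp 2 (fun g => (D i g : Matrix (Fin (d i)) (Fin (d i)) ℂ) a b)} = ⊤ := by
  set S : Set (EuclideanSpace ℂ G) := {f : EuclideanSpace ℂ G |
      ∃ i a b, f = WithLp.toLp 2 (fun g => (D i g : Matrix (Fin (d i)) (Fin (d i)) ℂ) a b)} with hS
  set M : Submodule ℂ (EuclideanSpace ℂ G) := Submodule.span ℂ S with hM
  rw [← Submodule.orthogonal_eq_bot_iff]
  by_contra hbot
  -- M is invariant under right translations
  have hMinv : ∀ x f, f ∈ M → rop x f ∈ M := by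
    intro x
    have hle : M.map (rop x) ≤ M := by
      rw [hM, Submodule.map_span, Submodule.span_le]
      rintro _ ⟨f, ⟨i, a, b, rfl⟩, rfl⟩
      have heq : rop x (WithLp.toLp 2 (fun g => (D i g : Matrix (Fin (d i)) (Fin (d i)) ℂ) a b))
          = ∑ c, ((D i x : Matrix (Fin (d i)) (Fin (d i)) ℂ) c b) •
              (WithLp.toLp 2 (fun g => (D i g : Matrix (Fin (d i)) (Fin (d i)) ℂ) a c) : EuclideanSpace ℂ G) := by
        ext g
        have hgx : (D i (g * x) : Matrix (Fin (d i)) (Fin (d i)) ℂ) a b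
            = ∑ c, (D i g : Matrix (Fin (d i)) (Fin (d i)) ℂ) a c
                * (D i x : Matrix (Fin (d i)) (Fin (d i)) ℂ) c b := by
          rw [_root_.map_mul]; exact Matrix.mul_apply
        show (D i (g * x) : Matrix (Fin (d i)) (Fin (d i)) ℂ) a b = _
        rw [hgx]
        simp only [WithLp.ofLp_sum, WithLp.ofLp_smul, Finset.sum_apply, Pi.smul_apply, smul_eq_mul]
        exact Finset.sum_congr rfl fun c _ => mul_comm _ _
      rw [heq]
      exact Submodule.sum_mem _ fun c _ => Submodule.smul_mem _ _
        (Submodule.subset_span ⟨i, a, c, rfl⟩)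
    intro f hf
    exact hle ⟨f, hf, rfl⟩
  -- the orthogonal complement is invariant
  have hOrthInv : ∀ x f, f ∈ Mᗮ → rop x f ∈ Mᗮ := by
    intro x f hf
    rw [Submodule.mem_orthogonal] at hf ⊢
    intro u hu
    calc (inner ℂ u (rop x f) : ℂ) = inner ℂ (rop x⁻¹ u) (rop x⁻¹ (rop x f)) :=
          (inner_rop x⁻¹ u _).symm
      _ = inner ℂ (rop x⁻¹ u) f := by rw [rop_rop, inv_mul_cancel, rop_one]
      _ = 0 := hf _ (hMinv x⁻¹ u hu)
  -- a minimal invariant nonzero subspace of Mᗮ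
  set P : ℕ → Prop := fun k => ∃ V : Submodule ℂ (EuclideanSpace ℂ G), V ≠ ⊥ ∧ V ≤ Mᗮ ∧
      (∀ x f, f ∈ V → rop x f ∈ V) ∧ Module.finrank ℂ V = k with hP
  have hPex : ∃ k, P k := ⟨Module.finrank ℂ Mᗮ, Mᗮ, hbot, le_rfl, hOrthInv, rfl⟩
  obtain ⟨V, hVbot, hVM, hVinv, hVrank⟩ := Nat.find_spec hPex
  have hmin : ∀ V' : Submodule ℂ (EuclideanSpace ℂ G), V' ≠ ⊥ → V' ≤ Mᗮ →
      (∀ x f, f ∈ V' → rop x f ∈ V') → Nat.find hPex ≤ Module.finrank ℂ V' :=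
    fun V' h1 h2 h3 => Nat.find_min' hPex ⟨V', h1, h2, h3, rfl⟩
  set n := Module.finrank ℂ V with hn_def
  have hn : 0 < n := by
    haveI : Nontrivial V := Submodule.nontrivial_iff_ne_bot.mpr hVbot
    exact Module.finrank_pos
  -- orthonormal basis of V
  set b : OrthonormalBasis (Fin n) ℂ V := stdOrthonormalBasis ℂ V with hb
  set v : Fin n → EuclideanSpace ℂ G := fun a => (b a : EuclideanSpace ℂ G) with hv
  have hv_mem : ∀ a, v a ∈ V := fun a => (b a).2
  have hON : ∀ a c, (inner ℂ (v a) (v c) : ℂ) = if a = c then 1 else 0 := by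
    have h := orthonormal_iff_ite.mp b.orthonormal
    intro a c
    exact h a c
  have hexp : ∀ f, f ∈ V → f = ∑ a, (inner ℂ (v a) f : ℂ) • v a := by
    intro f hf
    have h1 := b.sum_repr ⟨f, hf⟩
    have h2 : ∀ a, b.repr ⟨f, hf⟩ a = (inner ℂ (v a) f : ℂ) := fun a => by
      rw [b.repr_apply_apply]; rfl
    calc f = ((⟨f, hf⟩ : V) : EuclideanSpace ℂ G) := rfl
      _ = ((∑ a, b.repr ⟨f, hf⟩ a • b a : V) : EuclideanSpace ℂ G) := by rw [h1]
      _ = ∑ a, (inner ℂ (v a) f : ℂ) • v a := by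
          rw [Submodule.coe_sum]
          exact Finset.sum_congr rfl fun a _ => by rw [Submodule.coe_smul, h2]
  -- matrix of the right regular representation restricted to V
  set Emat : G → Matrix (Fin n) (Fin n) ℂ :=
    fun x => Matrix.of fun a c => (inner ℂ (v a) (rop x (v c)) : ℂ) with hEmat
  have hropv : ∀ x c, rop x (v c) = ∑ a, Emat x a c • v a := fun x c =>
    hexp (rop x (v c)) (hVinv x _ (hv_mem c))
  have hEmul : ∀ x y, Emat (x * y) = Emat x * Emat y := by
    intro x y
    ext a c
    show (inner ℂ (v a) (rop (x * y) (v c)) : ℂ) = ∑ e, Emat x a e * Emat y e c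
    rw [← rop_rop x y (v c), hropv y c, map_sum, inner_sum]
    refine Finset.sum_congr rfl fun e _ => ?_
    rw [LinearMap.map_smul, inner_smul_right]
    exact mul_comm _ _
  have hEone : Emat 1 = 1 := by
    ext a c
    show (inner ℂ (v a) (rop 1 (v c)) : ℂ) = (1 : Matrix (Fin n) (Fin n) ℂ) a c
    rw [rop_one, hON, Matrix.one_apply]
  have hpars : ∀ f h', f ∈ V → h' ∈ V →
      (∑ c, (inner ℂ f (v c) : ℂ) * (inner ℂ (v c) h' : ℂ)) = (inner ℂ f h' : ℂ) := by
    intro f h' hf hh'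
    conv_rhs => rw [hexp h' hh']
    rw [inner_sum]
    exact Finset.sum_congr rfl fun c _ => by rw [inner_smul_right]; exact mul_comm _ _
  have hEunit : ∀ x, Emat x ∈ Matrix.unitaryGroup (Fin n) ℂ := by
    intro x
    rw [Matrix.mem_unitaryGroup_iff']
    ext a c
    rw [Matrix.mul_apply, Matrix.one_apply]
    have hterm : ∀ e, (star (Emat x) : Matrix (Fin n) (Fin n) ℂ) a e * Emat x e c
        = (inner ℂ (rop x (v a)) (v e) : ℂ) * (inner ℂ (v e) (rop x (v c)) : ℂ) := by
      intro e
      rw [Matrix.star_apply]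
      congr 1
      show star ((inner ℂ (v e) (rop x (v a)) : ℂ)) = _
      exact inner_conj_symm _ _
    rw [Finset.sum_congr rfl fun e _ => hterm e,
      hpars _ _ (hVinv x _ (hv_mem a)) (hVinv x _ (hv_mem c)), inner_rop, hON]
  set EU : G →* Matrix.unitaryGroup (Fin n) ℂ := {
    toFun := fun x => ⟨Emat x, hEunit x⟩,
    map_one' := Subtype.ext hEone,
    map_mul' := fun x y => Subtype.ext (hEmul x y) } with hEU
  -- Schur's lemma for Emat, from minimality of V
  have hSchur : ∀ X : Matrix (Fin n) (Fin n) ℂ,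
      (∀ g, (EU g : Matrix (Fin n) (Fin n) ℂ) * X = X * (EU g : Matrix (Fin n) (Fin n) ℂ))
        → ∃ c : ℂ, X = c • 1 := by
    intro X hX
    have hX' : ∀ g, Emat g * X = X * Emat g := hX
    haveI : Nonempty (Fin n) := Fin.pos_iff_nonempty.mp hn
    obtain ⟨μ, hμ⟩ := Module.End.exists_eigenvalue (Matrix.mulVecLin X)
    obtain ⟨w, hw⟩ := hμ.exists_hasEigenvector
    refine ⟨μ, ?_⟩
    set W := LinearMap.ker (Matrix.mulVecLin (X - μ • 1)) with hW
    have hWmem : ∀ u : Fin n → ℂ, u ∈ W ↔ X.mulVec u = μ • u := by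
      intro u
      rw [hW, LinearMap.mem_ker, Matrix.mulVecLin_apply, Matrix.sub_mulVec, sub_eq_zero,
        Matrix.smul_mulVec, Matrix.one_mulVec]
    have hwW : w ∈ W := by
      rw [hWmem]
      have h := hw.apply_eq_smul
      rwa [Matrix.mulVecLin_apply] at h
    set φ : (Fin n → ℂ) →ₗ[ℂ] EuclideanSpace ℂ G := {
      toFun := fun u => ∑ a, u a • v a,
      map_add' := fun u1 u2 => by
        simp only [Pi.add_apply, add_smul]
        rw [Finset.sum_add_distrib],
      map_smul' := fun c u => by
        simp only [Pi.smul_apply, smul_eq_mul, RingHom.id_apply, ← smul_smul]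
        rw [Finset.smul_sum] } with hφ
    have hφinj : Function.Injective φ := by
      have hli : LinearIndependent ℂ v := (orthonormal_iff_ite.mpr hON).linearIndependent
      rw [← LinearMap.ker_eq_bot, Submodule.eq_bot_iff]
      intro u hu
      rw [LinearMap.mem_ker] at hu
      funext a
      exact Fintype.linearIndependent_iff.mp hli u hu a
    have hφV : ∀ u, φ u ∈ V := by
      intro u
      show (∑ a, u a • v a) ∈ V
      exact Submodule.sum_mem _ fun a _ => Submodule.smul_mem _ _ (hv_mem a)
    have hφE : ∀ x u, rop x (φ u) = φ ((Emat x).mulVec u) := by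
      intro x u
      show rop x (∑ c, u c • v c) = ∑ a, (Emat x).mulVec u a • v a
      rw [map_sum]
      simp only [LinearMap.map_smul, hropv x, Finset.smul_sum]
      rw [Finset.sum_comm]
      refine Finset.sum_congr rfl fun a _ => ?_
      rw [Matrix.mulVec, dotProduct, Finset.sum_smul]
      refine Finset.sum_congr rfl fun c _ => ?_
      rw [smul_smul, mul_comm]
    have hWE : ∀ x u, u ∈ W → (Emat x).mulVec u ∈ W := by
      intro x u hu
      rw [hWmem] at hu ⊢
      rw [Matrix.mulVec_mulVec, ← hX' x, ← Matrix.mulVec_mulVec, hu, Matrix.mulVec_smul]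
    set V' := W.map φ with hV'
    have hV'le : V' ≤ V := by rintro _ ⟨u, _, rfl⟩; exact hφV u
    have hV'bot : V' ≠ ⊥ := by
      rw [Submodule.ne_bot_iff]
      exact ⟨φ w, ⟨w, hwW, rfl⟩, fun h0 => hw.2 (hφinj (by rw [h0, map_zero]))⟩
    have hV'inv : ∀ x f, f ∈ V' → rop x f ∈ V' := by
      rintro x _ ⟨u, hu, rfl⟩
      exact ⟨_, hWE x u hu, (hφE x u).symm⟩
    have hle2 : Nat.find hPex ≤ Module.finrank ℂ V' := hmin V' hV'bot (hV'le.trans hVM) hV'inv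
    have hVV' : V' = V := Submodule.eq_of_le_of_finrank_le hV'le (by
      rw [← hn_def, hVrank]; exact hle2)
    have hWtop : W = ⊤ := by
      have h1 : Module.finrank ℂ W = Module.finrank ℂ V' :=
        (Submodule.equivMapOfInjective φ hφinj W).finrank_eq
      have h2 : Module.finrank ℂ W = Module.finrank ℂ (Fin n → ℂ) := by
        rw [h1, hVV', ← hn_def, Module.finrank_fintype_fun_eq_card, Fintype.card_fin]
      exact Submodule.eq_top_of_finrank_eq h2
    ext j k
    have hu : (Pi.single k 1 : Fin n → ℂ) ∈ W := hWtop ▸ Submodule.mem_top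
    rw [hWmem] at hu
    have h3 := congrFun hu j
    rw [Matrix.mulVec_single_one] at h3
    simp only [Matrix.col_apply, mul_one, Pi.smul_apply, Pi.single_apply, smul_eq_mul] at h3
    rw [h3, Matrix.smul_apply, Matrix.one_apply, smul_eq_mul]
    all_goals (by_cases hjk : j = k <;> simp [hjk, eq_comm])
  -- apply semiregularity to the irreducible representation Emat
  obtain ⟨i, T, hT0, hTint⟩ := hsemireg n hn EU hSchur
  have hTint' : ∀ g, Emat g * T = T * (D i g : Matrix (Fin (d i)) (Fin (d i)) ℂ) := hTint
  have hEinv : ∀ g, Emat g⁻¹ = (Emat g)ᴴ := by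
    intro g
    have h1 : EU g⁻¹ = (EU g)⁻¹ := map_inv EU g
    show (EU g⁻¹ : Matrix (Fin n) (Fin n) ℂ) = (Emat g)ᴴ
    rw [h1, Matrix.UnitaryGroup.inv_val]
    rfl
  have hDinv : ∀ g, (D i g⁻¹ : Matrix (Fin (d i)) (Fin (d i)) ℂ)
      = (D i g : Matrix (Fin (d i)) (Fin (d i)) ℂ)ᴴ := by
    intro g
    rw [map_inv, Matrix.UnitaryGroup.inv_val]
    rfl
  have hTadj : ∀ g, Tᴴ * Emat g = (D i g : Matrix (Fin (d i)) (Fin (d i)) ℂ) * Tᴴ := by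
    intro g
    have h1 := congrArg Matrix.conjTranspose (hTint' g⁻¹)
    rw [Matrix.conjTranspose_mul, Matrix.conjTranspose_mul, hEinv, hDinv,
      Matrix.conjTranspose_conjTranspose, Matrix.conjTranspose_conjTranspose] at h1
    exact h1
  obtain ⟨c, hc⟩ := hSchur (T * Tᴴ) (fun g => by
    show Emat g * (T * Tᴴ) = (T * Tᴴ) * Emat g
    rw [← Matrix.mul_assoc, hTint' g, Matrix.mul_assoc, ← hTadj g, ← Matrix.mul_assoc])
  have hc0 : c ≠ 0 := by
    intro h0
    rw [h0, zero_smul] at hc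
    apply hT0
    ext a p
    have h1 := congrFun (congrFun hc a) a
    rw [Matrix.mul_apply] at h1
    simp only [Matrix.conjTranspose_apply, Matrix.zero_apply] at h1
    have h2 : ∀ q, T a q * star (T a q) = ((Complex.normSq (T a q) : ℝ) : ℂ) := fun q =>
      Complex.mul_conj (T a q)
    rw [Finset.sum_congr rfl fun q _ => h2 q, ← Complex.ofReal_sum, Complex.ofReal_eq_zero] at h1
    have h3 := (Finset.sum_eq_zero_iff_of_nonneg
      (fun q _ => Complex.normSq_nonneg (T a q))).mp h1 p (Finset.mem_univ p)
    simpa [Complex.normSq_eq_zero] using h3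
  have hEc : ∀ x, Emat x = c⁻¹ • (T * (D i x : Matrix (Fin (d i)) (Fin (d i)) ℂ) * Tᴴ) := by
    intro x
    have h1 : Emat x * (T * Tᴴ) = T * (D i x : Matrix (Fin (d i)) (Fin (d i)) ℂ) * Tᴴ := by
      rw [← Matrix.mul_assoc, hTint' x, Matrix.mul_assoc]
    rw [hc, Matrix.mul_smul, Matrix.mul_one] at h1
    rw [← h1, smul_smul, inv_mul_cancel₀ hc0, one_smul]
  -- every element of V is in M
  have hcoefM : ∀ p q : Fin (d i),
      (WithLp.toLp 2 (fun x => (D i x : Matrix (Fin (d i)) (Fin (d i)) ℂ) p q) : EuclideanSpace ℂ G) ∈ M :=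
    fun p q => Submodule.subset_span ⟨i, p, q, rfl⟩
  have hEM : ∀ a e, (WithLp.toLp 2 (fun x => Emat x a e) : EuclideanSpace ℂ G) ∈ M := by
    intro a e
    have heq : (WithLp.toLp 2 (fun x => Emat x a e) : EuclideanSpace ℂ G)
        = ∑ p, ∑ q, (c⁻¹ * (T a p * star (T e q))) •
            (WithLp.toLp 2 (fun x => (D i x : Matrix (Fin (d i)) (Fin (d i)) ℂ) p q) : EuclideanSpace ℂ G) := by
      ext x
      have h1 := congrFun (congrFun (hEc x) a) e
      have h2 : (T * (D i x : Matrix (Fin (d i)) (Fin (d i)) ℂ) * Tᴴ) a e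
          = ∑ q, (∑ p, T a p * (D i x : Matrix (Fin (d i)) (Fin (d i)) ℂ) p q) * star (T e q) := by
        rw [Matrix.mul_apply]
        exact Finset.sum_congr rfl fun q _ => by rw [Matrix.mul_apply, Matrix.conjTranspose_apply]
      have h6 : ∀ q, c⁻¹ * ((∑ p, T a p * (D i x : Matrix (Fin (d i)) (Fin (d i)) ℂ) p q)
            * star (T e q))
          = ∑ p, (c⁻¹ * (T a p * star (T e q)))
              * (D i x : Matrix (Fin (d i)) (Fin (d i)) ℂ) p q := by
        intro q
        rw [Finset.sum_mul, Finset.mul_sum]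
        exact Finset.sum_congr rfl fun p _ => by ring
      show Emat x a e = _
      simp only [WithLp.ofLp_sum, WithLp.ofLp_smul, Finset.sum_apply, Pi.smul_apply, smul_eq_mul]
      rw [h1, Matrix.smul_apply, h2, smul_eq_mul, Finset.mul_sum]
      rw [Finset.sum_congr rfl fun q _ => h6 q, Finset.sum_comm]
    rw [heq]
    exact Submodule.sum_mem _ fun p _ => Submodule.sum_mem _ fun q _ =>
      Submodule.smul_mem _ _ (hcoefM p q)
  have hVM' : V ≤ M := by
    intro f hf
    have key : f = ∑ a, ∑ e, ((v a) (1 : G) * (inner ℂ (v e) f : ℂ)) •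
        (WithLp.toLp 2 (fun x => Emat x a e) : EuclideanSpace ℂ G) := by
      ext x
      have h3 : f x = ∑ a, (inner ℂ (v a) (rop x f) : ℂ) * (v a (1 : G)) := by
        have h2 := hexp (rop x f) (hVinv x f hf)
        calc f x = (rop x f) (1 : G) := by rw [rop_apply, one_mul]
          _ = ∑ a, (inner ℂ (v a) (rop x f) : ℂ) * (v a (1 : G)) := by
              conv_lhs => rw [h2]
              rw [WithLp.ofLp_sum, Finset.sum_apply]
              exact Finset.sum_congr rfl fun a _ => rfl
      have h4 : ∀ a, (inner ℂ (v a) (rop x f) : ℂ) = ∑ e, (inner ℂ (v e) f : ℂ) * Emat x a e := by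
        intro a
        have h5 : rop x f = ∑ e, (inner ℂ (v e) f : ℂ) • rop x (v e) := by
          conv_lhs => rw [hexp f hf]
          rw [map_sum]
          exact Finset.sum_congr rfl fun e _ => LinearMap.map_smul _ _ _
        rw [h5, inner_sum]
        exact Finset.sum_congr rfl fun e _ => by rw [inner_smul_right]; rfl
      rw [h3]
      simp only [h4, WithLp.ofLp_sum, WithLp.ofLp_smul, Finset.sum_apply, Pi.smul_apply, smul_eq_mul]
      refine Finset.sum_congr rfl fun a _ => ?_
      rw [Finset.sum_mul]
      exact Finset.sum_congr rfl fun e _ => by ring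
    rw [key]
    exact Submodule.sum_mem _ fun a _ => Submodule.sum_mem _ fun e _ =>
      Submodule.smul_mem _ _ (hEM a e)
  have hVeq : V = ⊥ := by
    rw [Submodule.eq_bot_iff]
    intro f hf
    have h2 : f ∈ Mᗮ := hVM hf
    rw [Submodule.mem_orthogonal] at h2
    exact inner_self_eq_zero.mp (h2 f (hVM' hf))
  exact hVbot hVeq


lemma coe_inv_mul_self
 {n : ℕ} (A : G →* Matrix.unitaryGroup (Fin n) ℂ) (g : G) :
    (A g⁻¹ : Matrix (Fin n) (Fin n) ℂ) * (A g : Matrix (Fin n) (Fin n) ℂ) = 1 := by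
  have : ((A g⁻¹ * A g : Matrix.unitaryGroup (Fin n) ℂ) : Matrix (Fin n) (Fin n) ℂ) = 1 := by
    rw [← _root_.map_mul, inv_mul_cancel, _root_.map_one, Matrix.UnitaryGroup.one_val]
  rw [← this]; rfl

lemma avg_intertwine {n m : ℕ}
    (A : G →* Matrix.unitaryGroup (Fin n) ℂ) (B : G →* Matrix.unitaryGroup (Fin m) ℂ)
    (X : Matrix (Fin n) (Fin m) ℂ) (h : G) :
    (A h : Matrix (Fin n) (Fin n) ℂ) *
        (∑ g : G, (A g : Matrix (Fin n) (Fin n) ℂ) * X * (B g⁻¹ : Matrix (Fin m) (Fin m) ℂ))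
      = (∑ g : G, (A g : Matrix (Fin n) (Fin n) ℂ) * X * (B g⁻¹ : Matrix (Fin m) (Fin m) ℂ)) *
          (B h : Matrix (Fin m) (Fin m) ℂ) := by
  rw [Matrix.mul_sum, Matrix.sum_mul]
  refine Fintype.sum_equiv (Equiv.mulLeft h) _ _ fun g => ?_
  have h1 : ((A (h * g) : Matrix (Fin n) (Fin n) ℂ)) = (A h : Matrix (Fin n) (Fin n) ℂ) * A g := by
    rw [_root_.map_mul]; rfl
  have h2 : ((B (h * g)⁻¹ : Matrix (Fin m) (Fin m) ℂ)) =
      (B g⁻¹ : Matrix (Fin m) (Fin m) ℂ) * B h⁻¹ := by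
    rw [_root_.mul_inv_rev, _root_.map_mul]; rfl
  simp only [Equiv.coe_mulLeft]
  rw [h1, h2]
  simp [Matrix.mul_assoc, coe_inv_mul_self B h]

lemma mul_std_mul_apply {n m : ℕ} (M : Matrix (Fin n) (Fin n) ℂ) (N : Matrix (Fin m) (Fin m) ℂ)
    (p a : Fin n) (q b : Fin m) :
    (M * Matrix.single p q (1 : ℂ) * N) a b = M a p * N q b := by
  rw [Matrix.mul_assoc, Matrix.mul_apply]
  have h1 : ∀ c : Fin n, (Matrix.single p q (1:ℂ) * N) c b
      = if c = p then N q b else 0 := by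
    intro c
    by_cases hc : c = p
    · subst hc; simp [Matrix.mul_apply, Matrix.single]
    · simp [Matrix.mul_apply, Matrix.single, Ne.symm hc, hc]
  simp only [h1, mul_ite, mul_zero]
  simp

lemma schur_ne {n m : ℕ}
    (A : G →* Matrix.unitaryGroup (Fin n) ℂ) (B : G →* Matrix.unitaryGroup (Fin m) ℂ)
    (hAB : ∀ T : Matrix (Fin n) (Fin m) ℂ,
      (∀ g, (A g : Matrix (Fin n) (Fin n) ℂ) * T = T * (B g : Matrix (Fin m) (Fin m) ℂ)) → T = 0)
    (a p : Fin n) (q b : Fin m) :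
    ∑ g : G, (A g : Matrix (Fin n) (Fin n) ℂ) a p * (B g⁻¹ : Matrix (Fin m) (Fin m) ℂ) q b = 0 := by
  have h0 := hAB (∑ g : G, (A g : Matrix (Fin n) (Fin n) ℂ) * Matrix.single p q (1:ℂ)
      * (B g⁻¹ : Matrix (Fin m) (Fin m) ℂ)) (fun h => avg_intertwine A B _ h)
  have h1 := congrFun (congrFun h0 a) b
  rw [Matrix.sum_apply] at h1
  simp only [mul_std_mul_apply] at h1
  simpa using h1

lemma schur_self {n : ℕ} (hn : 0 < n)
    (A : G →* Matrix.unitaryGroup (Fin n) ℂ)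
    (hA : ∀ X : Matrix (Fin n) (Fin n) ℂ,
      (∀ g, (A g : Matrix (Fin n) (Fin n) ℂ) * X = X * (A g : Matrix (Fin n) (Fin n) ℂ))
        → ∃ c : ℂ, X = c • 1)
    (a p q b : Fin n) :
    ∑ g : G, (A g : Matrix (Fin n) (Fin n) ℂ) a p * (A g⁻¹ : Matrix (Fin n) (Fin n) ℂ) q b
      = (Fintype.card G : ℂ) / n * (if p = q then 1 else 0) * (if a = b then 1 else 0) := by
  set T := ∑ g : G, (A g : Matrix (Fin n) (Fin n) ℂ) * Matrix.single p q (1:ℂ)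
      * (A g⁻¹ : Matrix (Fin n) (Fin n) ℂ) with hT
  obtain ⟨c, hc⟩ := hA T (fun h => avg_intertwine A A _ h)
  have htrg : ∀ g : G, ((A g : Matrix (Fin n) (Fin n) ℂ) * Matrix.single p q (1:ℂ)
      * (A g⁻¹ : Matrix (Fin n) (Fin n) ℂ)).trace = (if p = q then (1:ℂ) else 0) := by
    intro g
    rw [Matrix.trace_mul_cycle, coe_inv_mul_self A g, Matrix.one_mul]
    by_cases hpq : p = q
    · subst hpq; simp [Matrix.trace, Matrix.diag, Matrix.single]
    · simp only [Matrix.trace, Matrix.diag, Matrix.single, Matrix.of_apply, hpq,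
        if_neg]
      rw [if_neg (by simp), Finset.sum_eq_zero]
      intro x _
      by_cases hx : p = x
      · subst hx
        rw [if_neg]
        rintro ⟨-, h⟩
        exact hpq h.symm
      · simp [hx]
  have htr : T.trace = (Fintype.card G : ℂ) * (if p = q then 1 else 0) := by
    rw [hT, Matrix.trace_sum, Finset.sum_congr rfl (fun g _ => htrg g)]
    simp [Finset.card_univ, mul_comm]
  have htr2 : T.trace = c * n := by
    rw [hc]; simp [Matrix.trace_smul, Matrix.trace_one]
  have hn' : (n : ℂ) ≠ 0 := Nat.cast_ne_zero.2 hn.ne'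
  have hcval : c = (Fintype.card G : ℂ) / n * (if p = q then 1 else 0) := by
    have hcc : c = T.trace / n := by rw [htr2]; field_simp
    rw [hcc, htr]; ring
  have h1 := congrFun (congrFun hc a) b
  rw [hT, Matrix.sum_apply] at h1
  simp only [mul_std_mul_apply] at h1
  rw [h1, hcval]
  simp only [Matrix.smul_apply, Matrix.one_apply, smul_eq_mul]
  try ring


theorem sum_char {I : Type*} [Fintype I] [DecidableEq I]
    (d : I → ℕ) (hd : ∀ i, 0 < d i)
    (D : ∀ i, G →* Matrix.unitaryGroup (Fin (d i)) ℂ)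
    (hirr : ∀ i (X : Matrix (Fin (d i)) (Fin (d i)) ℂ),
      (∀ g, (D i g : Matrix (Fin (d i)) (Fin (d i)) ℂ) * X
          = X * (D i g : Matrix (Fin (d i)) (Fin (d i)) ℂ)) → ∃ c : ℂ, X = c • 1)
    (hdisj : ∀ i j, i ≠ j → ∀ T : Matrix (Fin (d i)) (Fin (d j)) ℂ,
      (∀ g, (D i g : Matrix (Fin (d i)) (Fin (d i)) ℂ) * T
          = T * (D j g : Matrix (Fin (d j)) (Fin (d j)) ℂ)) → T = 0)
    (hsemireg : ∀ (n : ℕ), 0 < n → ∀ (E : G →* Matrix.unitaryGroup (Fin n) ℂ),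
      (∀ X : Matrix (Fin n) (Fin n) ℂ,
        (∀ g, (E g : Matrix (Fin n) (Fin n) ℂ) * X = X * (E g : Matrix (Fin n) (Fin n) ℂ))
          → ∃ c : ℂ, X = c • 1) →
      ∃ i, ∃ T : Matrix (Fin n) (Fin (d i)) ℂ, T ≠ 0 ∧
        ∀ g, (E g : Matrix (Fin n) (Fin n) ℂ) * T
            = T * (D i g : Matrix (Fin (d i)) (Fin (d i)) ℂ))
    (k : G) :
    (∑ i, (d i : ℂ) * Matrix.trace (D i k : Matrix (Fin (d i)) (Fin (d i)) ℂ))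
      = if k = 1 then (Fintype.card G : ℂ) else 0 := by
  have hspan := coeff_span_top d D hsemireg
  have hcard0 : (Fintype.card G : ℂ) ≠ 0 := Nat.cast_ne_zero.mpr Fintype.card_ne_zero
  set F : EuclideanSpace ℂ G → ℂ := fun f => ∑ i, ((d i : ℂ) / (Fintype.card G : ℂ)) *
      ∑ a, ∑ e, (∑ g, f g * (D i g⁻¹ : Matrix (Fin (d i)) (Fin (d i)) ℂ) e a)
        * (D i k : Matrix (Fin (d i)) (Fin (d i)) ℂ) a e with hF
  have hmain : ∀ f : EuclideanSpace ℂ G, f k = F f := by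
    intro f
    have hf : f ∈ Submodule.span ℂ {f : EuclideanSpace ℂ G |
        ∃ i a b, f = WithLp.toLp 2 (fun g => (D i g : Matrix (Fin (d i)) (Fin (d i)) ℂ) a b)} := by
      rw [hspan]; exact Submodule.mem_top
    induction hf using Submodule.span_induction with
    | mem f hfS =>
      obtain ⟨j, p, q, rfl⟩ := hfS
      show (D j k : Matrix (Fin (d j)) (Fin (d j)) ℂ) p q = _
      rw [hF]
      beta_reduce
      rw [Finset.sum_eq_single j]
      · have hj : ∀ (a e : Fin (d j)),
            (∑ g : G, (D j g : Matrix (Fin (d j)) (Fin (d j)) ℂ) p q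
              * (D j g⁻¹ : Matrix (Fin (d j)) (Fin (d j)) ℂ) e a)
            = (Fintype.card G : ℂ) / (d j) * (if q = e then 1 else 0)
                * (if p = a then 1 else 0) :=
          fun a e => schur_self (hd j) (D j) (hirr j) p q e a
        simp only [hj]
        rw [Finset.sum_eq_single p]
        · rw [Finset.sum_eq_single q]
          · have hdj : ((d j : ℂ)) ≠ 0 := Nat.cast_ne_zero.mpr (hd j).ne'
            simp only [if_pos rfl]
            field_simp
            simp
          · intro e _ he
            simp [he, Ne.symm he]
          · intro habs; exact absurd (Finset.mem_univ q) habs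
        · intro a _ ha
          rw [Finset.sum_eq_zero]
          intro e _
          simp [Ne.symm ha, ha]
        · intro habs; exact absurd (Finset.mem_univ p) habs
      · intro i _ hij
        have hzero : ∀ (a : Fin (d i)) (e : Fin (d i)),
            (∑ g : G, (D j g : Matrix (Fin (d j)) (Fin (d j)) ℂ) p q
              * (D i g⁻¹ : Matrix (Fin (d i)) (Fin (d i)) ℂ) e a) = 0 :=
          fun a e => schur_ne (D j) (D i) (hdisj j i (Ne.symm hij)) p q e a
        simp only [hzero]
        simp
      · intro habs; exact absurd (Finset.mem_univ j) habs
    | zero => simp [hF]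
    | add f1 f2 hm1 hm2 ih1 ih2 =>
      show f1 k + f2 k = F (f1 + f2)
      rw [ih1, ih2, hF]
      beta_reduce
      simp only [PiLp.add_apply, Pi.add_apply, add_mul, mul_add, Finset.sum_add_distrib]
    | smul cc f1 hm1 ih =>
      show cc * f1 k = F (cc • f1)
      rw [ih, hF]
      beta_reduce
      simp only [PiLp.smul_apply, Pi.smul_apply, smul_eq_mul, mul_assoc, ← Finset.mul_sum]
      rw [Finset.mul_sum]
      refine Finset.sum_congr rfl fun i _ => ?_
      ring
  have hδ := hmain (WithLp.toLp 2 (fun g => if g = 1 then (1 : ℂ) else 0))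
  have h7 : ∀ i (a e : Fin (d i)),
      (∑ g : G, (if g = 1 then (1:ℂ) else 0) * (D i g⁻¹ : Matrix (Fin (d i)) (Fin (d i)) ℂ) e a)
      = (if e = a then 1 else 0) := by
    intro i a e
    rw [Finset.sum_eq_single 1]
    · rw [if_pos rfl, one_mul, inv_one, _root_.map_one, Matrix.UnitaryGroup.one_val,
        Matrix.one_apply]
    · intro g _ hg; rw [if_neg hg, zero_mul]
    · intro habs; exact absurd (Finset.mem_univ 1) habs
  rw [hF] at hδ
  beta_reduce at hδ
  simp only [h7] at hδ
  have h8 : ∀ i, (∑ a, ∑ e, (if e = a then (1:ℂ) else 0)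
      * (D i k : Matrix (Fin (d i)) (Fin (d i)) ℂ) a e)
      = Matrix.trace (D i k : Matrix (Fin (d i)) (Fin (d i)) ℂ) := by
    intro i
    rw [Matrix.trace]
    refine Finset.sum_congr rfl fun a _ => ?_
    rw [Finset.sum_eq_single a]
    · rw [if_pos rfl, one_mul]; rfl
    · intro e _ he; rw [if_neg he, zero_mul]
    · intro habs; exact absurd (Finset.mem_univ a) habs
  simp only [h8] at hδ
  calc ∑ i, (d i : ℂ) * Matrix.trace (D i k : Matrix (Fin (d i)) (Fin (d i)) ℂ)
      = (Fintype.card G : ℂ) * ∑ i, ((d i : ℂ) / (Fintype.card G : ℂ))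
          * Matrix.trace (D i k : Matrix (Fin (d i)) (Fin (d i)) ℂ) := by
        rw [Finset.mul_sum]
        refine Finset.sum_congr rfl fun i _ => ?_
        field_simp
    _ = (Fintype.card G : ℂ) * (if k = 1 then 1 else 0) := by rw [← hδ]
    _ = if k = 1 then (Fintype.card G : ℂ) else 0 := by
        by_cases hk : k = 1 <;> simp [hk]

end SemiregAux

/-- If U is a semi-regular unitary representation of a finite group G (its
isotypic decomposition U_g = ⊕_i D^i(g) ⊗ 1_{m_i} contains every irreducible representation
of G), then with Δ = (1/|G|) ⊕_i (d_i/m_i) 1 as above, tr(U_g† U_h Δ) = δ_{g,h} for all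
g, h ∈ G; in particular the operators {U_g} are linearly independent. -/
theorem semiregular_trace_delta_delta
    {G : Type*} [Group G] [Fintype G] {I : Type*} [Fintype I] [DecidableEq I]
    (d m : I → ℕ) (hd : ∀ i, 0 < d i) (hm : ∀ i, 0 < m i)
    (D : ∀ i, G →* Matrix.unitaryGroup (Fin (d i)) ℂ)
    (hirr : ∀ i (X : Matrix (Fin (d i)) (Fin (d i)) ℂ),
      (∀ g, (D i g : Matrix (Fin (d i)) (Fin (d i)) ℂ) * X
          = X * (D i g : Matrix (Fin (d i)) (Fin (d i)) ℂ)) → ∃ c : ℂ, X = c • 1)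
    (hdisj : ∀ i j, i ≠ j → ∀ T : Matrix (Fin (d i)) (Fin (d j)) ℂ,
      (∀ g, (D i g : Matrix (Fin (d i)) (Fin (d i)) ℂ) * T
          = T * (D j g : Matrix (Fin (d j)) (Fin (d j)) ℂ)) → T = 0)
    -- semi-regularity: every irreducible unitary representation of G admits a nonzero
    -- intertwiner with (i.e. is isomorphic to) some block D^i
    (hsemireg : ∀ (n : ℕ), 0 < n → ∀ (E : G →* Matrix.unitaryGroup (Fin n) ℂ),
      (∀ X : Matrix (Fin n) (Fin n) ℂ,
        (∀ g, (E g : Matrix (Fin n) (Fin n) ℂ) * X = X * (E g : Matrix (Fin n) (Fin n) ℂ))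
          → ∃ c : ℂ, X = c • 1) →
      ∃ i, ∃ T : Matrix (Fin n) (Fin (d i)) ℂ, T ≠ 0 ∧
        ∀ g, (E g : Matrix (Fin n) (Fin n) ℂ) * T
            = T * (D i g : Matrix (Fin (d i)) (Fin (d i)) ℂ))
    (U : G → Matrix (Σ i, Fin (d i) × Fin (m i)) (Σ i, Fin (d i) × Fin (m i)) ℂ)
    (hU : ∀ g, U g = Matrix.blockDiagonal' (fun i =>
      Matrix.kroneckerMap (· * ·) (D i g : Matrix (Fin (d i)) (Fin (d i)) ℂ)
        (1 : Matrix (Fin (m i)) (Fin (m i)) ℂ)))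
    (Δ : Matrix (Σ i, Fin (d i) × Fin (m i)) (Σ i, Fin (d i) × Fin (m i)) ℂ)
    (hΔ : Δ = Matrix.blockDiagonal' (fun i =>
      ((d i : ℂ) / ((m i : ℂ) * (Fintype.card G : ℂ)))
        • (1 : Matrix (Fin (d i) × Fin (m i)) (Fin (d i) × Fin (m i)) ℂ))) :
    (∀ g h : G, Matrix.trace ((U g)ᴴ * U h * Δ) = (if g = h then (1:ℂ) else 0)) ∧
    LinearIndependent ℂ U := by
  have hcard0 : (Fintype.card G : ℂ) ≠ 0 := Nat.cast_ne_zero.mpr Fintype.card_ne_zero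
  have key : ∀ g h : G, Matrix.trace ((U g)ᴴ * U h * Δ) = (if g = h then (1:ℂ) else 0) := by
    intro g h
    have hUadj : (U g)ᴴ = Matrix.blockDiagonal' (fun i =>
        Matrix.kroneckerMap (· * ·) (D i g⁻¹ : Matrix (Fin (d i)) (Fin (d i)) ℂ)
          (1 : Matrix (Fin (m i)) (Fin (m i)) ℂ)) := by
      rw [hU g, Matrix.blockDiagonal'_conjTranspose]
      refine congrArg Matrix.blockDiagonal' (funext fun i => ?_)
      have h1 : (D i g⁻¹ : Matrix (Fin (d i)) (Fin (d i)) ℂ)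
          = star (D i g : Matrix (Fin (d i)) (Fin (d i)) ℂ) := by
        rw [map_inv, Matrix.UnitaryGroup.inv_val]
      rw [h1]
      ext ⟨a, b⟩ ⟨c, e⟩
      beta_reduce
      simp only [Matrix.conjTranspose_apply, Matrix.kroneckerMap_apply, star_mul',
        Matrix.star_apply]
      congr 1
      by_cases heb : e = b
      · subst heb; simp [Matrix.one_apply]
      · simp [Matrix.one_apply, heb, Ne.symm heb]
    rw [hUadj, hU h, hΔ, ← Matrix.blockDiagonal'_mul, ← Matrix.blockDiagonal'_mul,
      Matrix.trace_blockDiagonal']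
    have hblk : ∀ i, Matrix.trace
        ((Matrix.kroneckerMap (· * ·) (D i g⁻¹ : Matrix (Fin (d i)) (Fin (d i)) ℂ)
            (1 : Matrix (Fin (m i)) (Fin (m i)) ℂ)
          * Matrix.kroneckerMap (· * ·) (D i h : Matrix (Fin (d i)) (Fin (d i)) ℂ)
            (1 : Matrix (Fin (m i)) (Fin (m i)) ℂ))
          * (((d i : ℂ) / ((m i : ℂ) * (Fintype.card G : ℂ)))
            • (1 : Matrix (Fin (d i) × Fin (m i)) (Fin (d i) × Fin (m i)) ℂ)))
        = ((d i : ℂ) / (Fintype.card G : ℂ))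
            * Matrix.trace (D i (g⁻¹ * h) : Matrix (Fin (d i)) (Fin (d i)) ℂ) := by
      intro i
      rw [Matrix.mul_smul, Matrix.mul_one, Matrix.trace_smul, ← Matrix.mul_kronecker_mul,
        Matrix.one_mul]
      have h2 : (D i g⁻¹ : Matrix (Fin (d i)) (Fin (d i)) ℂ)
          * (D i h : Matrix (Fin (d i)) (Fin (d i)) ℂ)
          = (D i (g⁻¹ * h) : Matrix (Fin (d i)) (Fin (d i)) ℂ) := by
        rw [_root_.map_mul]; rfl
      rw [h2, Matrix.trace_kronecker, Matrix.trace_one, Fintype.card_fin, smul_eq_mul]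
      have hmi : (m i : ℂ) ≠ 0 := Nat.cast_ne_zero.mpr (hm i).ne'
      field_simp
    rw [Finset.sum_congr rfl (fun i _ => hblk i)]
    have hs := SemiregAux.sum_char d hd D hirr hdisj hsemireg (g⁻¹ * h)
    have h3 : ∑ i, ((d i : ℂ) / (Fintype.card G : ℂ))
        * Matrix.trace (D i (g⁻¹ * h) : Matrix (Fin (d i)) (Fin (d i)) ℂ)
        = (Fintype.card G : ℂ)⁻¹ * ∑ i, (d i : ℂ)
            * Matrix.trace (D i (g⁻¹ * h) : Matrix (Fin (d i)) (Fin (d i)) ℂ) := by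
      rw [Finset.mul_sum]
      refine Finset.sum_congr rfl fun i _ => ?_
      rw [div_eq_inv_mul, mul_assoc]
    rw [h3, hs]
    by_cases hgh : g = h
    · subst hgh
      rw [if_pos (inv_mul_cancel g), if_pos rfl, inv_mul_cancel₀ hcard0]
    · rw [if_neg (fun hcon => hgh (inv_mul_eq_one.mp hcon)), if_neg hgh, mul_zero]
  refine ⟨key, ?_⟩
  rw [Fintype.linearIndependent_iff]
  intro cc hcc g0
  have h1 := congrArg (fun A => Matrix.trace ((U g0)ᴴ * A * Δ)) hcc
  rw [Matrix.mul_zero, Matrix.zero_mul, Matrix.trace_zero, Matrix.mul_sum, Matrix.sum_mul,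
    Matrix.trace_sum] at h1
  have h2 : ∀ g : G, Matrix.trace ((U g0)ᴴ * (cc g • U g) * Δ)
      = cc g * (if g0 = g then (1:ℂ) else 0) := by
    intro g
    rw [Matrix.mul_smul, Matrix.smul_mul, Matrix.trace_smul, smul_eq_mul, key g0 g]
  rw [Finset.sum_congr rfl (fun g _ => h2 g)] at h1
  simp only [mul_ite, mul_one, mul_zero] at h1
  rw [Finset.sum_ite_eq] at h1
  simpa using h1
end
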